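/- Craig's formula: for all x ≥ 0, Q(x) = (1/π) ∫₀^{π/2} exp(−x²/(2 sin²φ)) dφ, where Q(x) = (1/√(2π)) ∫_x^∞ e^{−u²/2} du. -/

import Mathlib

open MeasureTheory Real Set

/-- The Gaussian Q-function. -/
noncomputable def gaussQ (x : ℝ) : ℝ :=
  (1 / Real.sqrt (2 * Real.pi)) * ∫ u in Ioi x, Real.exp (-u ^ 2 / 2)

lemma aux_integrable_mul : Integrable (fun r : ℝ => r * Real.exp (-r ^ 2 / 2)) := by
  have h := integrable_mul_exp_neg_mul_sq (b := 1/2) (by norm_num)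
  refine h.congr ?_
  filter_upwards with r
  ring_nf

lemma aux_ftc (a : ℝ) : ∫ r in Ioi a, r * Real.exp (-r ^ 2 / 2) = Real.exp (-a ^ 2 / 2) := by
  have hderiv : ∀ r ∈ Ici a, HasDerivAt (fun r : ℝ => -Real.exp (-r ^ 2 / 2))
      (r * Real.exp (-r ^ 2 / 2)) r := by
    intro r _
    have h1 : HasDerivAt (fun r : ℝ => -r ^ 2 / 2) (-r) r := by
      have := ((hasDerivAt_pow 2 r).neg.div_const 2)
      refine this.congr_deriv ?_
      push_cast
      ring
    have := (h1.exp).neg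
    refine this.congr_deriv ?_
    ring
  have hint : IntegrableOn (fun r : ℝ => r * Real.exp (-r ^ 2 / 2)) (Ioi a) :=
    aux_integrable_mul.integrableOn
  have htend : Filter.Tendsto (fun r : ℝ => -Real.exp (-r ^ 2 / 2)) Filter.atTop (nhds 0) := by
    have h2 : Filter.Tendsto (fun r : ℝ => -r ^ 2 / 2) Filter.atTop Filter.atBot := by
      have hsq : Filter.Tendsto (fun r : ℝ => r ^ 2 / 2) Filter.atTop Filter.atTop :=
        (Filter.tendsto_pow_atTop two_ne_zero).atTop_div_const (by norm_num)
      have := Filter.tendsto_neg_atTop_atBot.comp hsq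
      refine this.congr fun r => ?_
      simp [Function.comp, neg_div]
    have := (Real.tendsto_exp_atBot.comp h2).neg
    simpa using this
  have := MeasureTheory.integral_Ioi_of_hasDerivAt_of_tendsto' hderiv hint htend
  rw [this]; ring

lemma aux_gauss : ∫ v in Ioi (0:ℝ), Real.exp (-v ^ 2 / 2) = Real.sqrt (Real.pi / 2) := by
  have h := integral_gaussian_Ioi (1/2)
  have e1 : (fun v : ℝ => Real.exp (-v ^ 2 / 2)) = fun v : ℝ => Real.exp (-(1/2) * v ^ 2) := by
    funext v; ring_nf
  rw [show (∫ v in Ioi (0:ℝ), Real.exp (-v ^ 2 / 2)) = ∫ v in Ioi (0:ℝ), Real.exp (-(1/2) * v ^ 2)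
    from by rw [e1], h]
  rw [show Real.pi / (1/2) = 4 * (Real.pi/2) by ring, Real.sqrt_mul (by norm_num : (0:ℝ) ≤ 4),
    show Real.sqrt 4 = 2 by rw [show (4:ℝ) = 2^2 by norm_num, Real.sqrt_sq (by norm_num : (0:ℝ) ≤ 2)]]
  ring

lemma aux_pi : Real.sqrt (2 * Real.pi) * Real.sqrt (Real.pi / 2) = Real.pi := by
  rw [← Real.sqrt_mul (by positivity), show 2 * Real.pi * (Real.pi / 2) = Real.pi ^ 2 by ring,
    Real.sqrt_sq Real.pi_pos.le]

lemma aux_key (x : ℝ) (hx : 0 ≤ x) :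
    (∫ u in Ioi x, Real.exp (-u ^ 2 / 2)) * Real.sqrt (Real.pi / 2)
      = ∫ φ in Ioc (0:ℝ) (Real.pi / 2), Real.exp (-x ^ 2 / (2 * Real.sin φ ^ 2)) := by
  set f : ℝ × ℝ → ℝ := fun z => Real.exp (-(z.1 ^ 2 + z.2 ^ 2) / 2) with hf
  set S : Set (ℝ × ℝ) := Ioi x ×ˢ Ioi 0 with hS
  set T : Set (ℝ × ℝ) := {p | (0 < p.2 ∧ p.2 < Real.pi / 2) ∧ x < p.1 * Real.cos p.2} with hT
  set G : ℝ × ℝ → ℝ := T.indicator (fun p => p.1 * Real.exp (-p.1 ^ 2 / 2)) with hG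
  have hTopen : IsOpen T := by
    apply IsOpen.inter
    · exact ((isOpen_lt continuous_const continuous_snd).inter
        (isOpen_lt continuous_snd continuous_const))
    · exact isOpen_lt continuous_const (continuous_fst.mul (Real.continuous_cos.comp continuous_snd))
  -- step 1: product of integrals as double integral over quadrant
  have h1 : (∫ u in Ioi x, Real.exp (-u ^ 2 / 2)) * Real.sqrt (Real.pi / 2)
      = ∫ z in S, f z := by
    rw [← aux_gauss, hS, MeasureTheory.Measure.volume_eq_prod,
      ← MeasureTheory.setIntegral_prod_mul]
    apply MeasureTheory.setIntegral_congr_fun (measurableSet_Ioi.prod measurableSet_Ioi)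
    intro z _
    show Real.exp (-z.1 ^ 2 / 2) * Real.exp (-z.2 ^ 2 / 2) = f z
    rw [hf, ← Real.exp_add]
    congr 1
    ring
  -- step 2: polar coordinates
  have h2 : ∫ z in S, f z = ∫ p in polarCoord.target, p.1 • S.indicator f (polarCoord.symm p) := by
    rw [← MeasureTheory.integral_indicator (measurableSet_Ioi.prod measurableSet_Ioi),
      ← integral_comp_polarCoord_symm]
  -- step 3: identify integrand with G on the target
  have h3 : ∫ p in polarCoord.target, p.1 • S.indicator f (polarCoord.symm p)
      = ∫ p in polarCoord.target, G p := by
    apply MeasureTheory.setIntegral_congr_fun (polarCoord.open_target.measurableSet)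
    rintro ⟨r, θ⟩ hp
    simp only [polarCoord_target, mem_prod, mem_Ioi, mem_Ioo] at hp
    obtain ⟨hr, hθ1, hθ2⟩ := hp
    have hmem : ((r * Real.cos θ, r * Real.sin θ) ∈ S) ↔ ((r, θ) ∈ T) := by
      simp only [hS, hT, mem_prod, mem_Ioi, mem_setOf_eq]
      constructor
      · rintro ⟨hc, hs⟩
        have hsin : 0 < Real.sin θ := by
          by_contra h
          push_neg at h
          nlinarith
        have hcos : 0 < Real.cos θ := by
          by_contra h
          push_neg at h
          nlinarith
        refine ⟨⟨?_, ?_⟩, hc⟩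
        · by_contra h
          push_neg at h
          have : Real.sin θ ≤ 0 :=
            Real.sin_nonpos_of_nonpos_of_neg_pi_le h hθ1.le
          linarith
        · by_contra h
          push_neg at h
          have : Real.cos θ ≤ 0 :=
            Real.cos_nonpos_of_pi_div_two_le_of_le h (by linarith [Real.pi_pos])
          linarith
      · rintro ⟨⟨h1', h2'⟩, hc⟩
        exact ⟨hc, mul_pos hr (Real.sin_pos_of_pos_of_lt_pi h1' (by linarith [Real.pi_pos]))⟩
    show r • S.indicator f (polarCoord.symm (r, θ)) = G (r, θ)
    rw [hG]
    by_cases hmem' : (r, θ) ∈ T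
    · have hin : polarCoord.symm (r, θ) ∈ S := by
        simpa [polarCoord_symm_apply] using hmem.mpr hmem'
      rw [Set.indicator_of_mem hmem', Set.indicator_of_mem hin]
      simp only [polarCoord_symm_apply, hf, smul_eq_mul]
      congr 2
      nlinarith [Real.sin_sq_add_cos_sq θ]
    · have hout : polarCoord.symm (r, θ) ∉ S := by
        simpa [polarCoord_symm_apply] using fun h => hmem' (hmem.mp h)
      rw [Set.indicator_of_notMem hmem', Set.indicator_of_notMem hout]
      simp
  -- step 4: extend to integral over all of ℝ²
  have h4 : ∫ p in polarCoord.target, G p = ∫ p, G p := by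
    apply MeasureTheory.setIntegral_eq_integral_of_forall_compl_eq_zero
    intro p hp
    rw [hG, Set.indicator_of_notMem]
    intro hpT
    apply hp
    rw [hT] at hpT
    obtain ⟨⟨h1', h2'⟩, hc⟩ := hpT
    have hcos : 0 < Real.cos p.2 := Real.cos_pos_of_mem_Ioo
      ⟨by linarith [Real.pi_pos], h2'⟩
    have hp1 : 0 < p.1 := by nlinarith
    simp only [polarCoord_target, mem_prod, mem_Ioi, mem_Ioo]
    exact ⟨hp1, by linarith [Real.pi_pos], by linarith [Real.pi_pos]⟩
  -- integrability of G
  have hbound : Integrable (fun p : ℝ × ℝ =>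
      |p.1 * Real.exp (-p.1 ^ 2 / 2)| * (Ioo (0:ℝ) (Real.pi/2)).indicator (fun _ => (1:ℝ)) p.2) := by
    rw [MeasureTheory.Measure.volume_eq_prod]
    have hg : Integrable ((Ioo (0:ℝ) (Real.pi/2)).indicator (fun _ => (1:ℝ))) := by
      rw [integrable_indicator_iff measurableSet_Ioo]
      exact integrableOn_const measure_Ioo_lt_top.ne
    exact MeasureTheory.Integrable.mul_prod
      (f := fun r : ℝ => |r * Real.exp (-r ^ 2 / 2)|)
      (g := (Ioo (0:ℝ) (Real.pi/2)).indicator (fun _ => (1:ℝ))) aux_integrable_mul.abs hg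
  have hGint : Integrable G := by
    apply hbound.mono
    · exact (aestronglyMeasurable_indicator_iff hTopen.measurableSet).2
        ((continuous_fst.mul (by fun_prop)).aestronglyMeasurable.restrict)
    · filter_upwards with p
      rw [hG]
      by_cases hpT : p ∈ T
      · rw [Set.indicator_of_mem hpT]
        obtain ⟨⟨h1', h2'⟩, _⟩ := hpT
        rw [Set.indicator_of_mem (by exact ⟨h1', h2'⟩ : p.2 ∈ Ioo (0:ℝ) (Real.pi/2))]
        simp only [Real.norm_eq_abs, abs_abs, mul_one, abs_mul,
          abs_of_pos (Real.exp_pos _)]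
        exact le_refl _
      · rw [Set.indicator_of_notMem hpT]
        simp only [norm_zero]
        positivity
  -- step 5: Fubini, swapping order
  have h5 : ∫ p, G p = ∫ θ : ℝ, ∫ r : ℝ, G (r, θ) := by
    have hunc : Integrable (Function.uncurry fun r θ : ℝ => G (r, θ)) (volume.prod volume) := by
      rw [← MeasureTheory.Measure.volume_eq_prod]
      exact hGint
    rw [MeasureTheory.Measure.volume_eq_prod, MeasureTheory.integral_prod _
      (by rw [← MeasureTheory.Measure.volume_eq_prod]; exact hGint)]
    exact MeasureTheory.integral_integral_swap hunc
  -- step 6: inner integral in r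
  have h6 : ∀ θ : ℝ, (∫ r : ℝ, G (r, θ))
      = (Ioo (0:ℝ) (Real.pi/2)).indicator
        (fun θ => Real.exp (-x ^ 2 / (2 * Real.cos θ ^ 2))) θ := by
    intro θ
    by_cases hθ : θ ∈ Ioo (0:ℝ) (Real.pi/2)
    · have hcos : 0 < Real.cos θ :=
        Real.cos_pos_of_mem_Ioo ⟨by linarith [Real.pi_pos, hθ.1], hθ.2⟩
      have heq : ∀ r : ℝ, G (r, θ)
          = (Ioi (x / Real.cos θ)).indicator (fun r => r * Real.exp (-r ^ 2 / 2)) r := by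
        intro r
        rw [hG, Set.indicator_apply, Set.indicator_apply]
        by_cases hr : x / Real.cos θ < r
        · rw [if_pos (show ((r, θ) : ℝ × ℝ) ∈ T from
            ⟨⟨hθ.1, hθ.2⟩, (div_lt_iff₀ hcos).mp hr⟩), if_pos (Set.mem_Ioi.mpr hr)]
        · rw [if_neg (show ((r, θ) : ℝ × ℝ) ∉ T from
            fun hmem => hr ((div_lt_iff₀ hcos).mpr hmem.2)),
            if_neg (fun h => hr (Set.mem_Ioi.mp h))]
      rw [MeasureTheory.integral_congr_ae (Filter.Eventually.of_forall heq),
        MeasureTheory.integral_indicator measurableSet_Ioi, aux_ftc,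
        Set.indicator_of_mem hθ]
      have hc : Real.cos θ ≠ 0 := ne_of_gt hcos
      congr 1
      rw [div_pow]
      field_simp
    · have heq : ∀ r : ℝ, G (r, θ) = 0 := by
        intro r
        rw [hG, Set.indicator_of_notMem]
        intro h
        exact hθ ⟨h.1.1, h.1.2⟩
      simp only [heq, MeasureTheory.integral_zero, Set.indicator_of_notMem hθ]
  -- step 7/8: reflection φ = π/2 - θ
  have h8 : (∫ θ in Ioo (0:ℝ) (Real.pi/2), Real.exp (-x ^ 2 / (2 * Real.cos θ ^ 2)))
      = ∫ φ in Ioc (0:ℝ) (Real.pi/2), Real.exp (-x ^ 2 / (2 * Real.sin φ ^ 2)) := by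
    rw [← MeasureTheory.integral_Ioc_eq_integral_Ioo,
      ← intervalIntegral.integral_of_le (by positivity : (0:ℝ) ≤ Real.pi/2),
      ← intervalIntegral.integral_of_le (by positivity : (0:ℝ) ≤ Real.pi/2)]
    have hrefl := intervalIntegral.integral_comp_sub_left (a := (0:ℝ)) (b := Real.pi/2)
      (fun θ => Real.exp (-x ^ 2 / (2 * Real.cos θ ^ 2))) (Real.pi/2)
    simp only [sub_self, sub_zero] at hrefl
    rw [← hrefl]
    apply intervalIntegral.integral_congr
    intro φ _
    simp [Real.cos_pi_div_two_sub]
  calc (∫ u in Ioi x, Real.exp (-u ^ 2 / 2)) * Real.sqrt (Real.pi / 2)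
      = ∫ z in S, f z := h1
    _ = ∫ p in polarCoord.target, p.1 • S.indicator f (polarCoord.symm p) := h2
    _ = ∫ p in polarCoord.target, G p := h3
    _ = ∫ p, G p := h4
    _ = ∫ θ : ℝ, ∫ r : ℝ, G (r, θ) := h5
    _ = ∫ θ : ℝ, (Ioo (0:ℝ) (Real.pi/2)).indicator
          (fun θ => Real.exp (-x ^ 2 / (2 * Real.cos θ ^ 2))) θ :=
        MeasureTheory.integral_congr_ae (Filter.Eventually.of_forall h6)
    _ = ∫ θ in Ioo (0:ℝ) (Real.pi/2), Real.exp (-x ^ 2 / (2 * Real.cos θ ^ 2)) :=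
        MeasureTheory.integral_indicator measurableSet_Ioo
    _ = _ := h8

theorem craig_formula (x : ℝ) (hx : 0 ≤ x) :
    gaussQ x = (1 / Real.pi) * ∫ φ in Ioc (0:ℝ) (Real.pi / 2),
      Real.exp (-x ^ 2 / (2 * Real.sin φ ^ 2)) := by
  have hkey := aux_key x hx
  have h1 : Real.sqrt (2 * Real.pi) ≠ 0 := by positivity
  have h2 : Real.sqrt (Real.pi / 2) ≠ 0 := by positivity
  unfold gaussQ
  rw [← hkey]
  rw [mul_comm (1 / Real.sqrt (2 * Real.pi)), mul_one_div,
    mul_comm (1 / Real.pi), mul_one_div,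
    div_eq_div_iff h1 (ne_of_gt Real.pi_pos)]
  conv_lhs => rw [← aux_pi]
  ring
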